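/- Suppose that in Algorithm niAPG every step satisfies the ε-inexact sufficient-decrease inequality F(x_{k+1}) ≤ min(F(y_k), Δ_k) − ((ρ − L)/2)·‖x_{k+1} − v_k‖² + ρ·ε_k for given nonnegative reals ε_k. Then for every k ≥ 1: Δ_{k+q+1} ≤ Δ_k − ((ρ − L)/2)·min_{t = k,…,k+q} ‖x_{t+1} − v_t‖² + ρ·∑_{t=k}^{k+q} ε_t. -/

import Mathlib

/-- Proposition 8: decrease of `Δ` over a window, inexact proximal steps.
If every niAPG step satisfies the ε-inexact sufficient-decrease inequality
`F x_{k+1} ≤ min (F y_k) Δ_k - ((ρ - L)/2)‖x_{k+1} - v_k‖² + ρ ε_k`, then for every `k ≥ 1`,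
`Δ_{k+q+1} ≤ Δ_k - ((ρ - L)/2) min_{t=k,…,k+q} ‖x_{t+1} - v_t‖² + ρ ∑_{t=k}^{k+q} ε_t`. -/
theorem niAPG_inexact_Delta_decrease
    {E : Type*} [NormedAddCommGroup E] [InnerProductSpace ℝ E] [FiniteDimensional ℝ E]
    (f g F : E → ℝ) (f' : E → E) (L η ρ : ℝ)
    (hL : 0 < L)
    (hf : ∀ x, HasGradientAt f (f' x) x)
    (hlip : ∀ x y, ‖f' x - f' y‖ ≤ L * ‖x - y‖)
    (hg : LowerSemicontinuous g)
    (hF : ∀ x, F x = f x + g x)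
    (hη : 0 < η) (hηL : η < 1 / L) (hρ : ρ = 1 / η)
    (q : ℕ) (x y v z : ℕ → E) (Δ : ℕ → ℝ) (ε : ℕ → ℝ)
    (hεnn : ∀ k, 0 ≤ ε k)
    (hx01 : x 0 = x 1)
    (hy : ∀ k, 1 ≤ k → y k = x k + ((((k : ℝ) - 1) / ((k : ℝ) + 2)) • (x k - x (k - 1))))
    (hΔ : ∀ k, ∀ hk : 1 ≤ k, Δ k =
      (Finset.Icc (max 1 (k - q)) k).sup' (Finset.nonempty_Icc.mpr (by omega))
        (fun t => F (x t)))
    (hv : ∀ k, 1 ≤ k → v k = if F (y k) ≤ Δ k then y k else x k)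
    (hz : ∀ k, 1 ≤ k → z k = v k - η • f' (v k))
    (hdec : ∀ k, 1 ≤ k →
      F (x (k + 1)) ≤ min (F (y k)) (Δ k) - ((ρ - L) / 2) * ‖x (k + 1) - v k‖ ^ 2
        + ρ * ε k) :
    ∀ k, 1 ≤ k →
      Δ (k + q + 1) ≤ Δ k - ((ρ - L) / 2) *
          (Finset.Icc k (k + q)).inf' (Finset.nonempty_Icc.mpr (by omega))
            (fun t => ‖x (t + 1) - v t‖ ^ 2)
        + ρ * ∑ t ∈ Finset.Icc k (k + q), ε t := by
  have hρpos : 0 < ρ := by rw [hρ]; positivity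
  have hLρ : L < ρ := by
    rw [hρ, lt_div_iff₀ hη]
    have h2 := (lt_div_iff₀ hL).mp hηL
    linarith
  have hc : 0 ≤ (ρ - L) / 2 := by linarith
  -- one-step near-monotonicity of Δ
  have hstep : ∀ s, 1 ≤ s → Δ (s + 1) ≤ Δ s + ρ * ε s := by
    intro s hs
    rw [hΔ (s + 1) (by omega)]
    apply Finset.sup'_le
    intro t ht
    simp only [Finset.mem_Icc] at ht
    rcases eq_or_lt_of_le ht.2 with heq | hlt
    · subst heq
      have hd := hdec s hs
      have hmin : min (F (y s)) (Δ s) ≤ Δ s := min_le_right _ _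
      have hnn : 0 ≤ ((ρ - L) / 2) * ‖x (s + 1) - v s‖ ^ 2 := by positivity
      linarith
    · have hmem : t ∈ Finset.Icc (max 1 (s - q)) s := by
        simp only [Finset.mem_Icc]; omega
      have hle := Finset.le_sup' (fun t => F (x t)) hmem
      rw [← hΔ s hs] at hle
      have hεs : 0 ≤ ρ * ε s := mul_nonneg hρpos.le (hεnn s)
      linarith
  -- accumulated near-monotonicity
  have hacc : ∀ n k, 1 ≤ k → Δ (k + n) ≤ Δ k + ρ * ∑ t ∈ Finset.Ico k (k + n), ε t := by
    intro n
    induction n with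
    | zero => intro k hk; simp
    | succ n ih =>
      intro k hk
      have h1 := ih k hk
      have h2 := hstep (k + n) (by omega)
      have hsum : ∑ t ∈ Finset.Ico k (k + n + 1), ε t
          = ∑ t ∈ Finset.Ico k (k + n), ε t + ε (k + n) :=
        Finset.sum_Ico_succ_top (by omega) _
      rw [show k + (n + 1) = k + n + 1 by omega, hsum, mul_add]
      linarith
  intro k hk
  rw [hΔ (k + q + 1) (by omega)]
  apply Finset.sup'_le
  intro t ht
  rw [Finset.mem_Icc] at ht
  obtain ⟨s, rfl⟩ : ∃ s, t = s + 1 := ⟨t - 1, by omega⟩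
  have hsk : 1 ≤ s := by omega
  have hd := hdec s hsk
  have hmin : min (F (y s)) (Δ s) ≤ Δ s := min_le_right _ _
  -- Δ s ≤ Δ k + ρ * ∑_{Ico k s}
  have hΔs : Δ s ≤ Δ k + ρ * ∑ t ∈ Finset.Ico k s, ε t := by
    have := hacc (s - k) k hk
    rwa [show k + (s - k) = s by omega] at this
  -- inf ≤ current term
  have hmemI : s ∈ Finset.Icc k (k + q) := by simp only [Finset.mem_Icc]; omega
  have hinf := Finset.inf'_le (fun t => ‖x (t + 1) - v t‖ ^ 2) hmemI
  have hinf' : ((ρ - L) / 2) *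
      (Finset.Icc k (k + q)).inf' (Finset.nonempty_Icc.mpr (by omega))
        (fun t => ‖x (t + 1) - v t‖ ^ 2)
      ≤ ((ρ - L) / 2) * ‖x (s + 1) - v s‖ ^ 2 :=
    mul_le_mul_of_nonneg_left hinf hc
  -- sum bound
  have hsum1 : ∑ t ∈ Finset.Ico k s, ε t + ε s = ∑ t ∈ Finset.Icc k s, ε t := by
    rw [← Finset.Ico_add_one_right_eq_Icc, Finset.sum_Ico_succ_top (by omega)]
  have hsub : Finset.Icc k s ⊆ Finset.Icc k (k + q) := by
    apply Finset.Icc_subset_Icc_right; omega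
  have hsum2 : ∑ t ∈ Finset.Icc k s, ε t ≤ ∑ t ∈ Finset.Icc k (k + q), ε t :=
    Finset.sum_le_sum_of_subset_of_nonneg hsub (fun i _ _ => hεnn i)
  nlinarith [mul_le_mul_of_nonneg_left hsum2 hρpos.le]
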